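/- With the notation of the doubling construction, suppose in addition that Δ is connected and not bipartite, and that X has a unique minimal normal subgroup N_0, with N_0 nonabelian. Then G = ⟨X × X, t⟩ has a unique minimal normal subgroup, namely L = N_0 × N_0 ≤ X × X. If moreover every nontrivial normal subgroup of X is transitive on VΔ (i.e. X is quasiprimitive on VΔ), then G is bi-quasiprimitive on VΓ and Γ is a connected (G,2s)-arc-transitive digraph. -/

import Mathlib

namespace Doubling

variable {W : Type*}

/-- The arc set of a digraph is asymmetric (in particular loopless). -/
def IsDigraph {α : Type*} (B : α → α → Prop) : Prop := ∀ u v : α, B u v → ¬ B v u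

/-- Connectivity of the underlying undirected graph. -/
def Connected {α : Type*} (B : α → α → Prop) : Prop :=
  ∀ u v : α, Relation.ReflTransGen (fun a b => B a b ∨ B b a) u v

/-- The underlying undirected graph is bipartite. -/
def Bipartite {α : Type*} (B : α → α → Prop) : Prop :=
  ∃ S : Set α, ∀ u v : α, B u v → (u ∈ S ↔ v ∉ S)

/-- `G` consists of automorphisms of the digraph with arc set `B`. -/
def PreservesArcs {α : Type*} (B : α → α → Prop) (G : Subgroup (Equiv.Perm α)) : Prop :=
  ∀ g ∈ G, ∀ u v : α, B u v → B (g u) (g v)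

/-- `G` is transitive on vertices. -/
def VertexTransitive {α : Type*} (G : Subgroup (Equiv.Perm α)) : Prop :=
  ∀ u v : α, ∃ g ∈ G, g u = v

/-- `p` is an `s`-arc of the digraph with arc set `B`. -/
def IsArcSeq {α : Type*} (B : α → α → Prop) (s : ℕ) (p : Fin (s + 1) → α) : Prop :=
  ∀ i : Fin s, B (p i.castSucc) (p i.succ)

/-- `G` is transitive on the `s`-arcs of the digraph with arc set `B`. -/
def ArcTransitive {α : Type*} (B : α → α → Prop) (G : Subgroup (Equiv.Perm α)) (s : ℕ) : Prop :=
  ∀ p q : Fin (s + 1) → α, IsArcSeq B s p → IsArcSeq B s q →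
    ∃ g ∈ G, ∀ i : Fin (s + 1), g (p i) = q i

/-- Every vertex of the digraph with arc set `B` has out-valency and in-valency `k`. -/
def Valency {α : Type*} (B : α → α → Prop) (k : ℕ) : Prop :=
  ∀ v : α, {w : α | B v w}.ncard = k ∧ {w : α | B w v}.ncard = k

/-- The arc set of the doubling digraph `Γ` on `VΔ × VΔ × Z₂`:
`(v,w,0) → (v',w',1)` iff `v' = v` and `(w,w') ∈ AΔ`, and
`(v,w,1) → (v',w',0)` iff `(v,v') ∈ AΔ` and `w' = w`. -/
def doubleArc (B : W → W → Prop) :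
    W × W × ZMod 2 → W × W × ZMod 2 → Prop :=
  fun u u' =>
    (u.2.2 = 0 ∧ u'.2.2 = 1 ∧ u'.1 = u.1 ∧ B u.2.1 u'.2.1) ∨
    (u.2.2 = 1 ∧ u'.2.2 = 0 ∧ B u.1 u'.1 ∧ u.2.1 = u'.2.1)

/-- The permutation `(x,y) : (v,w,δ) ↦ (v^x, w^y, δ)` of `VΔ × VΔ × Z₂`. -/
def pairPerm (x y : Equiv.Perm W) : Equiv.Perm (W × W × ZMod 2) :=
  Equiv.prodCongr x (Equiv.prodCongr y (Equiv.refl (ZMod 2)))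

/-- The embedding of `Sym(VΔ) × Sym(VΔ)` into `Sym(VΔ × VΔ × Z₂)`. -/
def pairHom : Equiv.Perm W × Equiv.Perm W →* Equiv.Perm (W × W × ZMod 2) where
  toFun p := pairPerm p.1 p.2
  map_one' := by
    ext u <;> simp [pairPerm]
  map_mul' a b := by
    ext u <;> simp [pairPerm]

/-- The permutation `τ : (v,w,δ) ↦ (w,v,δ+1)` of `VΔ × VΔ × Z₂`. -/
def tauPerm : Equiv.Perm (W × W × ZMod 2) where
  toFun u := (u.2.1, u.1, u.2.2 + 1)
  invFun u := (u.2.1, u.1, u.2.2 + 1)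
  left_inv := by
    have h : ∀ z : ZMod 2, z + 1 + 1 = z := by decide
    intro u
    simp [h]
  right_inv := by
    have h : ∀ z : ZMod 2, z + 1 + 1 = z := by decide
    intro u
    simp [h]

/-- The permutation `t = (g,1)τ : (v,w,δ) ↦ (w, v^g, δ+1)`. -/
def tPerm (g : Equiv.Perm W) : Equiv.Perm (W × W × ZMod 2) :=
  tauPerm * pairPerm g 1

/-- The group `G⁺ = X × X` acting coordinatewise on `VΔ × VΔ × Z₂`. -/
def doubleGroupPlus (X : Subgroup (Equiv.Perm W)) : Subgroup (Equiv.Perm (W × W × ZMod 2)) :=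
  Subgroup.map pairHom (X.prod X)

/-- The group `G = ⟨G⁺, t⟩`. -/
def doubleGroup (X : Subgroup (Equiv.Perm W)) (g : Equiv.Perm W) :
    Subgroup (Equiv.Perm (W × W × ZMod 2)) :=
  doubleGroupPlus X ⊔ Subgroup.closure {tPerm g}

/-- `N` is a subgroup of `G` which is normal in `G`. -/
def NormalIn {α : Type*} (N G : Subgroup (Equiv.Perm α)) : Prop :=
  N ≤ G ∧ ∀ g ∈ G, ∀ x ∈ N, g * x * g⁻¹ ∈ N

/-- `L` is a minimal normal subgroup of `G`. -/
def MinimalNormalIn {α : Type*} (L G : Subgroup (Equiv.Perm α)) : Prop :=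
  NormalIn L G ∧ L ≠ ⊥ ∧
    ∀ L' : Subgroup (Equiv.Perm α), NormalIn L' G → L' ≠ ⊥ → L' ≤ L → L' = L

/-- `G` is bi-quasiprimitive on `α`: every nontrivial normal subgroup has at most two
orbits, and some normal subgroup has exactly two orbits. -/
def BiQuasiprimitive {α : Type*} (G : Subgroup (Equiv.Perm α)) : Prop :=
  (∀ L : Subgroup (Equiv.Perm α), NormalIn L G → L ≠ ⊥ →
    Nat.card (Quotient (MulAction.orbitRel L α)) ≤ 2) ∧
  (∃ L : Subgroup (Equiv.Perm α), NormalIn L G ∧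
    Nat.card (Quotient (MulAction.orbitRel L α)) = 2)

section Basic

variable {W : Type*}

@[simp] lemma pairPerm_apply (x y : Equiv.Perm W) (u : W × W × ZMod 2) :
    pairPerm x y u = (x u.1, y u.2.1, u.2.2) := rfl

@[simp] lemma pairHom_apply (p : Equiv.Perm W × Equiv.Perm W) (u : W × W × ZMod 2) :
    pairHom p u = (p.1 u.1, p.2 u.2.1, u.2.2) := rfl

lemma zmod2_add_add (z : ZMod 2) : z + 1 + 1 = z := by revert z; decide

@[simp] lemma tPerm_apply (g : Equiv.Perm W) (u : W × W × ZMod 2) :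
    tPerm g u = (u.2.1, g u.1, u.2.2 + 1) := rfl

lemma tPerm_inv_apply (g : Equiv.Perm W) (u : W × W × ZMod 2) :
    (tPerm g)⁻¹ u = (g⁻¹ u.2.1, u.1, u.2.2 + 1) := by
  have h : tPerm g (g⁻¹ u.2.1, u.1, u.2.2 + 1) = u := by
    simp [zmod2_add_add]
  conv_lhs => rw [← h]
  exact Equiv.symm_apply_apply _ _

lemma pairHom_eq_iff {x y x' y' : Equiv.Perm W}
    (h : pairHom (x, y) = pairHom (x', y')) : x = x' ∧ y = y' := by
  constructor
  · ext w
    have := congrArg (fun e : Equiv.Perm (W × W × ZMod 2) => (e (w, w, 0)).1) h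
    simpa using this
  · ext w
    have := congrArg (fun e : Equiv.Perm (W × W × ZMod 2) => (e (w, w, 0)).2.1) h
    simpa using this

lemma tPerm_conj (g : Equiv.Perm W) (a b : Equiv.Perm W) :
    tPerm g * pairHom (a, b) * (tPerm g)⁻¹ = pairHom (b, g * a * g⁻¹) := by
  apply Equiv.ext
  intro u
  simp [Equiv.Perm.mul_apply, tPerm_inv_apply, zmod2_add_add]

lemma tPerm_mul_pairHom (g : Equiv.Perm W) (a b : Equiv.Perm W) :
    tPerm g * pairHom (a, b) = pairHom (b, g * a * g⁻¹) * tPerm g := by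
  rw [← tPerm_conj]
  group

lemma tPerm_sq (g : Equiv.Perm W) : tPerm g * tPerm g = pairHom (g, g) := by
  apply Equiv.ext
  intro u
  simp [Equiv.Perm.mul_apply, zmod2_add_add]

lemma tPerm_inv (g : Equiv.Perm W) : (tPerm g)⁻¹ = pairHom (g⁻¹, g⁻¹) * tPerm g := by
  have h : (pairHom (g⁻¹, g⁻¹) * tPerm g) * tPerm g = 1 := by
    rw [mul_assoc, tPerm_sq, ← map_mul]
    simp
    exact map_one _
  have := mul_right_cancel (a := (pairHom ((g:Equiv.Perm W)⁻¹, g⁻¹) * tPerm g))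
    (b := tPerm g) (c := (tPerm g)⁻¹) ?_
  · exact this.symm
  · rw [h, inv_mul_cancel]

lemma mem_doubleGroupPlus {X : Subgroup (Equiv.Perm W)} {h : Equiv.Perm (W × W × ZMod 2)} :
    h ∈ doubleGroupPlus X ↔ ∃ x ∈ X, ∃ y ∈ X, h = pairHom (x, y) := by
  constructor
  · rintro ⟨⟨x, y⟩, hxy, rfl⟩
    exact ⟨x, hxy.1, y, hxy.2, rfl⟩
  · rintro ⟨x, hx, y, hy, rfl⟩
    exact ⟨(x, y), ⟨hx, hy⟩, rfl⟩

lemma doubleGroupPlus_le (X : Subgroup (Equiv.Perm W)) (g : Equiv.Perm W) :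
    doubleGroupPlus X ≤ doubleGroup X g := le_sup_left

lemma tPerm_mem (X : Subgroup (Equiv.Perm W)) (g : Equiv.Perm W) :
    tPerm g ∈ doubleGroup X g :=
  Subgroup.mem_sup_right (Subgroup.subset_closure rfl)

end Basic
section GroupTheory

variable {W : Type*}

/-- Decomposition of `doubleGroup X g` into the two cosets of `G⁺`. -/
lemma doubleGroup_decomp {X : Subgroup (Equiv.Perm W)} {g : Equiv.Perm W} (hg : g ∈ X)
    {h : Equiv.Perm (W × W × ZMod 2)} (hh : h ∈ doubleGroup X g) :
    (∃ x ∈ X, ∃ y ∈ X, h = pairHom (x, y)) ∨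
    (∃ x ∈ X, ∃ y ∈ X, h = pairHom (x, y) * tPerm g) := by
  set t := tPerm g with ht
  let S : Subgroup (Equiv.Perm (W × W × ZMod 2)) :=
  { carrier := {h | (∃ x ∈ X, ∃ y ∈ X, h = pairHom (x, y)) ∨
      (∃ x ∈ X, ∃ y ∈ X, h = pairHom (x, y) * t)}
    one_mem' := Or.inl ⟨1, X.one_mem, 1, X.one_mem, (map_one _).symm⟩
    mul_mem' := by
      rintro a b (⟨x, hx, y, hy, rfl⟩ | ⟨x, hx, y, hy, rfl⟩)
        (⟨x', hx', y', hy', rfl⟩ | ⟨x', hx', y', hy', rfl⟩)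
      · exact Or.inl ⟨x * x', X.mul_mem hx hx', y * y', X.mul_mem hy hy', by
          rw [← map_mul]; rfl⟩
      · refine Or.inr ⟨x * x', X.mul_mem hx hx', y * y', X.mul_mem hy hy', ?_⟩
        rw [← mul_assoc, ← map_mul]; rfl
      · refine Or.inr ⟨x * y', X.mul_mem hx hy',
          y * (g * x' * g⁻¹), X.mul_mem hy (X.mul_mem (X.mul_mem hg hx') (X.inv_mem hg)), ?_⟩
        rw [mul_assoc, tPerm_mul_pairHom, ← mul_assoc, ← map_mul]; rfl
      · refine Or.inl ⟨x * y' * g, X.mul_mem (X.mul_mem hx hy') hg,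
          y * (g * x' * g⁻¹) * g,
          X.mul_mem (X.mul_mem hy (X.mul_mem (X.mul_mem hg hx') (X.inv_mem hg))) hg, ?_⟩
        have : pairHom (x, y) * t * (pairHom (x', y') * t)
            = pairHom (x, y) * (t * pairHom (x', y')) * t := by group
        rw [this, tPerm_mul_pairHom, ← mul_assoc, ← map_mul, mul_assoc, tPerm_sq, ← map_mul]
        rfl
    inv_mem' := by
      rintro a (⟨x, hx, y, hy, rfl⟩ | ⟨x, hx, y, hy, rfl⟩)
      · exact Or.inl ⟨x⁻¹, X.inv_mem hx, y⁻¹, X.inv_mem hy, by rw [← map_inv]; rfl⟩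
      · refine Or.inr ⟨g⁻¹ * y⁻¹, X.mul_mem (X.inv_mem hg) (X.inv_mem hy),
          g⁻¹ * (g * x⁻¹ * g⁻¹), X.mul_mem (X.inv_mem hg)
            (X.mul_mem (X.mul_mem hg (X.inv_mem hx)) (X.inv_mem hg)), ?_⟩
        rw [mul_inv_rev, tPerm_inv, ← map_inv, mul_assoc, tPerm_mul_pairHom,
          ← mul_assoc, ← map_mul]
        rfl }
  have hle : doubleGroup X g ≤ S := by
    apply sup_le
    · intro a ha
      rcases mem_doubleGroupPlus.mp ha with ⟨x, hx, y, hy, rfl⟩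
      exact Or.inl ⟨x, hx, y, hy, rfl⟩
    · rw [Subgroup.closure_le]
      rintro a rfl
      exact Or.inr ⟨1, X.one_mem, 1, X.one_mem, by rw [Prod.mk_one_one, map_one, one_mul]⟩
  exact hle hh

lemma normalIn_inf {α : Type*} {G M N : Subgroup (Equiv.Perm α)}
    (hM : NormalIn M G) (hN : NormalIn N G) : NormalIn (M ⊓ N) G :=
  ⟨inf_le_left.trans hM.1, fun g hgG x hx =>
    ⟨hM.2 g hgG x hx.1, hN.2 g hgG x hx.2⟩⟩

/-- In a finite setting, every nontrivial normal subgroup contains a minimal normal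
subgroup. -/
lemma exists_minimalNormal_le {α : Type*} [Finite α] (G : Subgroup (Equiv.Perm α)) :
    ∀ (n : ℕ) (P : Subgroup (Equiv.Perm α)), Nat.card P ≤ n → NormalIn P G → P ≠ ⊥ →
      ∃ M, MinimalNormalIn M G ∧ M ≤ P := by
  intro n
  induction n with
  | zero =>
    intro P hcard _ _
    have : Nat.card P ≠ 0 := Nat.card_ne_zero.mpr ⟨⟨1, P.one_mem⟩, inferInstance⟩
    omega
  | succ n ih =>
    intro P hcard hPn hPb
    by_cases hminP : ∀ P' : Subgroup (Equiv.Perm α), NormalIn P' G → P' ≠ ⊥ → P' ≤ P → P' = P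
    · exact ⟨P, ⟨hPn, hPb, hminP⟩, le_refl P⟩
    · push_neg at hminP
      obtain ⟨P', h1, h2, h3, h4⟩ := hminP
      have hlt : Nat.card P' < Nat.card P := by
        have hss : (P' : Set (Equiv.Perm α)) ⊂ (P : Set (Equiv.Perm α)) :=
          HasSubset.Subset.ssubset_of_ne (by exact_mod_cast h3)
            (fun he => h4 (SetLike.coe_injective he))
        have := Set.ncard_lt_ncard hss (Set.toFinite _)
        simpa [← Nat.card_coe_set_eq] using this
      obtain ⟨M, hM, hMle⟩ := ih P' (by omega) h1 h2
      exact ⟨M, hM, hMle.trans h3⟩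

end GroupTheory
section PartOne

variable {W : Type*}

lemma pairHom_one : (pairHom ((1 : Equiv.Perm W), (1 : Equiv.Perm W)))
    = (1 : Equiv.Perm (W × W × ZMod 2)) := map_one _

lemma pairHom_mul (a b c d : Equiv.Perm W) :
    pairHom (a, b) * pairHom (c, d) = pairHom (a * c, b * d) := by
  rw [← map_mul]; rfl

lemma pairHom_inv (a b : Equiv.Perm W) :
    (pairHom (a, b))⁻¹ = pairHom (a⁻¹, b⁻¹) := by
  rw [← map_inv]; rfl

lemma pairHom_conj (x y a b : Equiv.Perm W) :
    pairHom (x, y) * pairHom (a, b) * (pairHom (x, y))⁻¹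
      = pairHom (x * a * x⁻¹, y * b * y⁻¹) := by
  rw [pairHom_inv, pairHom_mul, pairHom_mul]

lemma conj_conj {α : Type*} [Group α] (u v z : α) :
    (u * v) * z * (u * v)⁻¹ = u * (v * z * v⁻¹) * u⁻¹ := by group

lemma mem_map_pairHom_prod {A C : Subgroup (Equiv.Perm W)} {h : Equiv.Perm (W × W × ZMod 2)} :
    h ∈ Subgroup.map pairHom (A.prod C) ↔ ∃ x ∈ A, ∃ y ∈ C, h = pairHom (x, y) := by
  constructor
  · rintro ⟨⟨x, y⟩, hxy, rfl⟩
    exact ⟨x, hxy.1, y, hxy.2, rfl⟩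
  · rintro ⟨x, hx, y, hy, rfl⟩
    exact ⟨(x, y), ⟨hx, hy⟩, rfl⟩

variable {X N₀ : Subgroup (Equiv.Perm W)} {g : Equiv.Perm W}

lemma L_normalIn (hg : g ∈ X) (hN : NormalIn N₀ X) :
    NormalIn (Subgroup.map pairHom (N₀.prod N₀)) (doubleGroup X g) := by
  constructor
  · refine le_trans ?_ (doubleGroupPlus_le X g)
    exact Subgroup.map_mono (Subgroup.prod_mono hN.1 hN.1)
  · intro h hh z hz
    rcases mem_map_pairHom_prod.mp hz with ⟨a, ha, b, hb, rfl⟩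
    rcases doubleGroup_decomp hg hh with ⟨x, hx, y, hy, rfl⟩ | ⟨x, hx, y, hy, rfl⟩
    · rw [pairHom_conj]
      exact mem_map_pairHom_prod.mpr ⟨_, hN.2 x hx a ha, _, hN.2 y hy b hb, rfl⟩
    · rw [conj_conj, tPerm_conj, pairHom_conj]
      exact mem_map_pairHom_prod.mpr ⟨_, hN.2 x hx b hb, _,
        hN.2 y hy _ (hN.2 g hg a ha), rfl⟩

lemma exists_ne_one_of_ne_bot {α : Type*} {H : Subgroup (Equiv.Perm α)} (h : H ≠ ⊥) :
    ∃ x ∈ H, x ≠ 1 := by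
  by_contra hc
  push_neg at hc
  exact h ((Subgroup.eq_bot_iff_forall H).mpr hc)

lemma L_ne_bot (hNbot : N₀ ≠ ⊥) :
    Subgroup.map pairHom (N₀.prod N₀) ≠ (⊥ : Subgroup (Equiv.Perm (W × W × ZMod 2))) := by
  obtain ⟨a, ha, hane⟩ := exists_ne_one_of_ne_bot hNbot
  intro hbot
  have h1 : pairHom (a, (1 : Equiv.Perm W)) ∈ Subgroup.map pairHom (N₀.prod N₀) :=
    mem_map_pairHom_prod.mpr ⟨a, ha, 1, N₀.one_mem, rfl⟩
  rw [hbot, Subgroup.mem_bot] at h1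
  have : pairHom ((a : Equiv.Perm W), (1 : Equiv.Perm W)) = pairHom (1, 1) := by
    rw [h1]; exact (map_one _).symm
  exact hane (pairHom_eq_iff this).1

lemma L_minimal [Finite W] (hg : g ∈ X) (hmin : MinimalNormalIn N₀ X)
    (hnonab : ¬ ∀ a ∈ N₀, ∀ b ∈ N₀, a * b = b * a) :
    MinimalNormalIn (Subgroup.map pairHom (N₀.prod N₀)) (doubleGroup X g) := by
  obtain ⟨hN, hNbot, hNmin⟩ := hmin
  refine ⟨L_normalIn hg hN, L_ne_bot hNbot, ?_⟩
  intro K hKn hKbot hKle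
  -- every element of K has the form pairHom (a, b) with a b ∈ N₀
  have hKform : ∀ h ∈ K, ∃ a ∈ N₀, ∃ b ∈ N₀, h = pairHom (a, b) :=
    fun h hh => mem_map_pairHom_prod.mp (hKle hh)
  -- conjugation facts
  have hconjX : ∀ x ∈ X, ∀ y ∈ X, ∀ a b : Equiv.Perm W, pairHom (a, b) ∈ K →
      pairHom (x * a * x⁻¹, y * b * y⁻¹) ∈ K := by
    intro x hx y hy a b hab
    have := hKn.2 (pairHom (x, y)) (doubleGroupPlus_le X g
      (mem_doubleGroupPlus.mpr ⟨x, hx, y, hy, rfl⟩)) _ hab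
    rwa [pairHom_conj] at this
  have hswap : ∀ a b : Equiv.Perm W, pairHom (a, b) ∈ K →
      pairHom (b, g * a * g⁻¹) ∈ K := by
    intro a b hab
    have := hKn.2 (tPerm g) (tPerm_mem X g) _ hab
    rwa [tPerm_conj] at this
  -- the subgroup P1 = {a | ∃ b, pairHom (a,b) ∈ K}
  let P1 : Subgroup (Equiv.Perm W) :=
  { carrier := {a | ∃ b, pairHom (a, b) ∈ K}
    one_mem' := ⟨1, by rw [pairHom_one]; exact K.one_mem⟩
    mul_mem' := by
      rintro a a' ⟨b, hb⟩ ⟨b', hb'⟩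
      exact ⟨b * b', by rw [← pairHom_mul]; exact K.mul_mem hb hb'⟩
    inv_mem' := by
      rintro a ⟨b, hb⟩
      exact ⟨b⁻¹, by rw [← pairHom_inv]; exact K.inv_mem hb⟩ }
  have hP1N : P1 ≤ N₀ := by
    rintro a ⟨b, hb⟩
    obtain ⟨a', ha', b', hb', heq⟩ := hKform _ hb
    obtain ⟨h1, h2⟩ := pairHom_eq_iff heq
    rwa [← h1] at ha'
  have hP1n : NormalIn P1 X := by
    refine ⟨hP1N.trans hN.1, ?_⟩
    rintro x hx a ⟨b, hb⟩
    exact ⟨b, by simpa using hconjX x hx 1 X.one_mem a b hb⟩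
  have hP1bot : P1 ≠ ⊥ := by
    obtain ⟨h, hh, hne⟩ := exists_ne_one_of_ne_bot hKbot
    obtain ⟨a, ha, b, hb, rfl⟩ := hKform _ hh
    rw [Subgroup.ne_bot_iff_exists_ne_one]
    by_cases hae : a = 1
    · subst hae
      have hbne : b ≠ 1 := by
        intro hbe; subst hbe; exact hne pairHom_one
      have := hswap _ _ hh
      refine ⟨⟨b, ⟨g * 1 * g⁻¹, this⟩⟩, fun hc => hbne (congrArg Subtype.val hc)⟩
    · exact ⟨⟨a, ⟨b, hh⟩⟩, fun hc => hae (congrArg Subtype.val hc)⟩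
  have hP1 : P1 = N₀ := hNmin P1 hP1n hP1bot hP1N
  -- P2
  have hP2mem : ∀ a ∈ N₀, ∃ b, pairHom (b, a) ∈ K := by
    intro a ha
    have : g⁻¹ * a * g ∈ P1 := by
      rw [hP1]
      exact hN.2 g⁻¹ (X.inv_mem hg) a ha
    obtain ⟨b, hb⟩ := this
    refine ⟨b, ?_⟩
    have := hswap _ _ hb
    have hrw : g * (g⁻¹ * a * g) * g⁻¹ = a := by group
    rwa [hrw] at this
  -- first-coordinate commutator subgroup
  have key1 : ∀ c ∈ N₀, pairHom (c, (1 : Equiv.Perm W)) ∈ K := by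
    -- the subgroup P = {c | pairHom (c, 1) ∈ K}
    let P : Subgroup (Equiv.Perm W) :=
    { carrier := {c | pairHom (c, 1) ∈ K}
      one_mem' := by
        show pairHom (1,1) ∈ K
        rw [pairHom_one]
        exact K.one_mem
      mul_mem' := by
        intro c c' hc hc'
        show pairHom (c * c', 1) ∈ K
        rw [show c * c' = c * c' from rfl, ← one_mul (1 : Equiv.Perm W), ← pairHom_mul]
        exact K.mul_mem hc hc'
      inv_mem' := by
        intro c hc
        show pairHom (c⁻¹, 1) ∈ K
        rw [show (1 : Equiv.Perm W) = 1⁻¹ by simp, ← pairHom_inv]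
        exact K.inv_mem hc }
    have hPN : P ≤ N₀ := by
      intro c hc
      obtain ⟨a', ha', b', hb', heq⟩ := hKform _ hc
      obtain ⟨h1, h2⟩ := pairHom_eq_iff heq
      rwa [← h1] at ha'
    have hPn : NormalIn P X := by
      refine ⟨hPN.trans hN.1, ?_⟩
      intro x hx c hc
      show pairHom (x * c * x⁻¹, 1) ∈ K
      have := hconjX x hx 1 X.one_mem c 1 hc
      simpa using this
    have hPbot : P ≠ ⊥ := by
      push_neg at hnonab
      obtain ⟨n, hn, a, ha, hne⟩ := hnonab
      have haP1 : a ∈ P1 := by rw [hP1]; exact ha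
      obtain ⟨b, hb⟩ := haP1
      have h1 : pairHom (n * a * n⁻¹, b) ∈ K := by
        simpa using hconjX n (hN.1 hn) 1 X.one_mem a b hb
      have h2 : pairHom (n * a * n⁻¹ * a⁻¹, 1) ∈ K := by
        have := K.mul_mem h1 (K.inv_mem hb)
        rwa [pairHom_inv, pairHom_mul, mul_inv_cancel] at this
      rw [Subgroup.ne_bot_iff_exists_ne_one]
      refine ⟨⟨n * a * n⁻¹ * a⁻¹, h2⟩, ?_⟩
      intro hc
      have hcomm : n * a * n⁻¹ * a⁻¹ = 1 := congrArg Subtype.val hc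
      apply hne
      have h3 : n * a * n⁻¹ * a⁻¹ * a * n = a * n := by rw [hcomm]; group
      calc n * a = n * a * n⁻¹ * a⁻¹ * a * n := by group
        _ = a * n := h3
    have := hNmin P hPn hPbot hPN
    intro c hc
    rw [← this] at hc
    exact hc
  have key2 : ∀ c ∈ N₀, pairHom ((1 : Equiv.Perm W), c) ∈ K := by
    let P : Subgroup (Equiv.Perm W) :=
    { carrier := {c | pairHom (1, c) ∈ K}
      one_mem' := by
        show pairHom (1,1) ∈ K
        rw [pairHom_one]
        exact K.one_mem
      mul_mem' := by
        intro c c' hc hc'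
        show pairHom (1, c * c') ∈ K
        rw [← one_mul (1 : Equiv.Perm W), ← pairHom_mul]
        exact K.mul_mem hc hc'
      inv_mem' := by
        intro c hc
        show pairHom (1, c⁻¹) ∈ K
        rw [show (1 : Equiv.Perm W) = 1⁻¹ by simp, ← pairHom_inv]
        exact K.inv_mem hc }
    have hPN : P ≤ N₀ := by
      intro c hc
      obtain ⟨a', ha', b', hb', heq⟩ := hKform _ hc
      obtain ⟨h1, h2⟩ := pairHom_eq_iff heq
      rwa [← h2] at hb'
    have hPn : NormalIn P X := by
      refine ⟨hPN.trans hN.1, ?_⟩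
      intro x hx c hc
      show pairHom (1, x * c * x⁻¹) ∈ K
      have := hconjX 1 X.one_mem x hx 1 c hc
      simpa using this
    have hPbot : P ≠ ⊥ := by
      push_neg at hnonab
      obtain ⟨n, hn, a, ha, hne⟩ := hnonab
      obtain ⟨b, hb⟩ := hP2mem a ha
      have h1 : pairHom (b, n * a * n⁻¹) ∈ K := by
        simpa using hconjX 1 X.one_mem n (hN.1 hn) b a hb
      have h2 : pairHom ((1 : Equiv.Perm W), n * a * n⁻¹ * a⁻¹) ∈ K := by
        have := K.mul_mem h1 (K.inv_mem hb)
        rwa [pairHom_inv, pairHom_mul, mul_inv_cancel] at this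
      rw [Subgroup.ne_bot_iff_exists_ne_one]
      refine ⟨⟨n * a * n⁻¹ * a⁻¹, h2⟩, ?_⟩
      intro hc
      have hcomm : n * a * n⁻¹ * a⁻¹ = 1 := congrArg Subtype.val hc
      apply hne
      have h3 : n * a * n⁻¹ * a⁻¹ * a * n = a * n := by rw [hcomm]; group
      calc n * a = n * a * n⁻¹ * a⁻¹ * a * n := by group
        _ = a * n := h3
    have := hNmin P hPn hPbot hPN
    intro c hc
    rw [← this] at hc
    exact hc
  -- conclude K = L
  refine le_antisymm hKle ?_
  intro h hh
  obtain ⟨a, ha, b, hb, rfl⟩ := mem_map_pairHom_prod.mp hh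
  have : pairHom ((a : Equiv.Perm W), (b : Equiv.Perm W)) = pairHom (a, 1) * pairHom (1, b) := by
    rw [pairHom_mul]; simp
  rw [this]
  exact K.mul_mem (key1 a ha) (key2 b hb)

end PartOne
section Uniqueness

variable {W : Type*} {X N₀ : Subgroup (Equiv.Perm W)} {g : Equiv.Perm W}

/-- If `X` has unique minimal normal subgroup `N₀` which is nonabelian, then the
centralizer of `N₀` in `X` is trivial. -/
lemma centralizer_triv [Finite W] (hmin : MinimalNormalIn N₀ X)
    (huniq : ∀ L : Subgroup (Equiv.Perm W), MinimalNormalIn L X → L = N₀)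
    (hnonab : ¬ ∀ a ∈ N₀, ∀ b ∈ N₀, a * b = b * a) :
    ∀ x ∈ X, (∀ a ∈ N₀, x * a = a * x) → x = 1 := by
  obtain ⟨hN, hNbot, _⟩ := hmin
  let C : Subgroup (Equiv.Perm W) :=
  { carrier := {x | x ∈ X ∧ ∀ a ∈ N₀, x * a = a * x}
    one_mem' := ⟨X.one_mem, fun a _ => by group⟩
    mul_mem' := by
      rintro x y ⟨hx, hxc⟩ ⟨hy, hyc⟩
      refine ⟨X.mul_mem hx hy, fun a ha => ?_⟩
      calc x * y * a = x * (y * a) := by group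
        _ = x * (a * y) := by rw [hyc a ha]
        _ = (x * a) * y := by group
        _ = (a * x) * y := by rw [hxc a ha]
        _ = a * (x * y) := by group
    inv_mem' := by
      rintro x ⟨hx, hxc⟩
      refine ⟨X.inv_mem hx, fun a ha => ?_⟩
      calc x⁻¹ * a = x⁻¹ * (a * x) * x⁻¹ := by group
        _ = x⁻¹ * (x * a) * x⁻¹ := by rw [hxc a ha]
        _ = a * x⁻¹ := by group }
  have hCn : NormalIn C X := by
    refine ⟨fun x hx => hx.1, ?_⟩
    rintro y hy x ⟨hx, hxc⟩
    refine ⟨X.mul_mem (X.mul_mem hy hx) (X.inv_mem hy), fun a ha => ?_⟩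
    have ha' : y⁻¹ * a * y ∈ N₀ := hN.2 y⁻¹ (X.inv_mem hy) a ha
    have := hxc _ ha'
    calc y * x * y⁻¹ * a = y * (x * (y⁻¹ * a * y)) * y⁻¹ := by group
      _ = y * ((y⁻¹ * a * y) * x) * y⁻¹ := by rw [this]
      _ = a * (y * x * y⁻¹) := by group
  have hCbot : C = ⊥ := by
    by_contra hne
    obtain ⟨M₀, hM₀, hM₀le⟩ := exists_minimalNormal_le X (Nat.card C) C le_rfl hCn hne
    have := huniq M₀ hM₀
    rw [this] at hM₀le
    apply hnonab
    intro a ha b hb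
    exact ((hM₀le ha).2 b hb).symm ▸ rfl
  intro x hx hxc
  have : x ∈ C := ⟨hx, hxc⟩
  rw [hCbot, Subgroup.mem_bot] at this
  exact this

lemma L_unique [Finite W] (hg : g ∈ X) (hmin : MinimalNormalIn N₀ X)
    (huniq : ∀ L : Subgroup (Equiv.Perm W), MinimalNormalIn L X → L = N₀)
    (hnonab : ¬ ∀ a ∈ N₀, ∀ b ∈ N₀, a * b = b * a) :
    ∀ M : Subgroup (Equiv.Perm (W × W × ZMod 2)),
      MinimalNormalIn M (doubleGroup X g) → M = Subgroup.map pairHom (N₀.prod N₀) := by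
  intro M hM
  have hLmin := L_minimal hg hmin hnonab
  set L := Subgroup.map pairHom (N₀.prod N₀) with hL
  by_cases hML : M ⊓ L = ⊥
  · exfalso
    obtain ⟨m, hm, hmne⟩ := exists_ne_one_of_ne_bot hM.2.1
    have hmG : m ∈ doubleGroup X g := hM.1.1 hm
    have hcomm : ∀ z ∈ L, m * z * m⁻¹ = z := by
      intro z hz
      have h1 : m * z * m⁻¹ * z⁻¹ ∈ L :=
        L.mul_mem (hLmin.1.2 m hmG z hz) (L.inv_mem hz)
      have h2 : m * z * m⁻¹ * z⁻¹ ∈ M := by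
        have hzG : z ∈ doubleGroup X g := hLmin.1.1 hz
        have : z * m⁻¹ * z⁻¹ ∈ M := hM.1.2 z hzG m⁻¹ (M.inv_mem hm)
        have h3 := M.mul_mem hm this
        have heq : m * (z * m⁻¹ * z⁻¹) = m * z * m⁻¹ * z⁻¹ := by group
        rwa [heq] at h3
      have : m * z * m⁻¹ * z⁻¹ ∈ M ⊓ L := ⟨h2, h1⟩
      rw [hML, Subgroup.mem_bot] at this
      calc m * z * m⁻¹ = m * z * m⁻¹ * z⁻¹ * z := by group
        _ = z := by rw [this]; group
    rcases doubleGroup_decomp hg hmG with ⟨x, hx, y, hy, rfl⟩ | ⟨x, hx, y, hy, rfl⟩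
    · have hx1 : x = 1 := by
        refine centralizer_triv hmin huniq hnonab x hx (fun a ha => ?_)
        have hz : pairHom (a, (1:Equiv.Perm W)) ∈ L :=
          mem_map_pairHom_prod.mpr ⟨a, ha, 1, N₀.one_mem, rfl⟩
        have := hcomm _ hz
        rw [pairHom_conj] at this
        have := (pairHom_eq_iff this).1
        calc x * a = x * a * x⁻¹ * x := by group
          _ = a * x := by rw [this]
      have hy1 : y = 1 := by
        refine centralizer_triv hmin huniq hnonab y hy (fun b hb => ?_)
        have hz : pairHom ((1:Equiv.Perm W), b) ∈ L :=
          mem_map_pairHom_prod.mpr ⟨1, N₀.one_mem, b, hb, rfl⟩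
        have := hcomm _ hz
        rw [pairHom_conj] at this
        have := (pairHom_eq_iff this).2
        calc y * b = y * b * y⁻¹ * y := by group
          _ = b * y := by rw [this]
      rw [hx1, hy1] at hmne
      exact hmne pairHom_one
    · obtain ⟨a, ha, hane⟩ := exists_ne_one_of_ne_bot hmin.2.1
      have hz : pairHom (a, (1:Equiv.Perm W)) ∈ L :=
        mem_map_pairHom_prod.mpr ⟨a, ha, 1, N₀.one_mem, rfl⟩
      have := hcomm _ hz
      rw [mul_inv_rev, show pairHom (x, y) * tPerm g * pairHom (a, 1) *
        ((tPerm g)⁻¹ * (pairHom (x, y))⁻¹) = pairHom (x, y) *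
        (tPerm g * pairHom (a, 1) * (tPerm g)⁻¹) * (pairHom (x, y))⁻¹ by group,
        tPerm_conj, pairHom_conj] at this
      have h1 := (pairHom_eq_iff this).1
      apply hane
      calc a = x * 1 * x⁻¹ := h1.symm
        _ = 1 := by group
  · have h1 : M ⊓ L = M := hM.2.2 (M ⊓ L) (normalIn_inf hM.1 hLmin.1) hML inf_le_left
    have h2 : M ≤ L := by rw [← h1]; exact inf_le_right
    exact hLmin.2.2 M hM.1 hM.2.1 h2

end Uniqueness
section Connectivity

variable {W : Type*}

/-- The smallest equivalence relation on vertices such that out-neighbours of related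
vertices are related. -/
inductive Erel (B : W → W → Prop) : W → W → Prop
  | refl (u : W) : Erel B u u
  | symm {u v : W} : Erel B u v → Erel B v u
  | trans {u v w : W} : Erel B u v → Erel B v w → Erel B u w
  | step {z z' u v : W} : Erel B z z' → B z u → B z' v → Erel B u v

lemma Erel.invariant {B : W → W → Prop} {X : Subgroup (Equiv.Perm W)}
    (hAut : PreservesArcs B X) {x : Equiv.Perm W} (hx : x ∈ X) {u v : W}
    (h : Erel B u v) : Erel B (x u) (x v) := by
  induction h with
  | refl u => exact .refl _
  | symm _ ih => exact .symm ih
  | trans _ _ ih1 ih2 => exact .trans ih1 ih2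
  | step _ hz hz' ih => exact .step ih (hAut x hx _ _ hz) (hAut x hx _ _ hz')

lemma Erel_top [Finite W] {B : W → W → Prop} {X : Subgroup (Equiv.Perm W)}
    (hAut : PreservesArcs B X) (hconn : Connected B)
    (hout : ∀ u : W, ∃ v, B u v) (hin : ∀ u : W, ∃ v, B v u)
    (hqp : ∀ L : Subgroup (Equiv.Perm W), NormalIn L X → L ≠ ⊥ →
      ∀ u v : W, ∃ x ∈ L, x u = v)
    (hnonabX : ∃ a ∈ X, ∃ b ∈ X, a * b ≠ b * a) :
    ∀ u v : W, Erel B u v := by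
  classical
  let K : Subgroup (Equiv.Perm W) :=
  { carrier := {x | x ∈ X ∧ ∀ w : W, Erel B (x w) w}
    one_mem' := ⟨X.one_mem, fun w => by simpa using Erel.refl (B := B) w⟩
    mul_mem' := by
      rintro x y ⟨hx, hxe⟩ ⟨hy, hye⟩
      refine ⟨X.mul_mem hx hy, fun w => ?_⟩
      have h1 : Erel B (x (y w)) (y w) := hxe (y w)
      have h2 : Erel B (y w) w := hye w
      simpa [Equiv.Perm.mul_apply] using h1.trans h2
    inv_mem' := by
      rintro x ⟨hx, hxe⟩
      refine ⟨X.inv_mem hx, fun w => ?_⟩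
      have h1 : Erel B (x (x⁻¹ w)) (x⁻¹ w) := hxe (x⁻¹ w)
      simpa using h1.symm }
  have hKn : NormalIn K X := by
    refine ⟨fun x hx => hx.1, ?_⟩
    rintro y hy x ⟨hx, hxe⟩
    refine ⟨X.mul_mem (X.mul_mem hy hx) (X.inv_mem hy), fun w => ?_⟩
    have h1 : Erel B (x (y⁻¹ w)) (y⁻¹ w) := hxe (y⁻¹ w)
    have h2 : Erel B (y (x (y⁻¹ w))) (y (y⁻¹ w)) := h1.invariant hAut hy
    simpa [Equiv.Perm.mul_apply] using h2
  by_cases hKbot : K = ⊥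
  · exfalso
    let sQ : Setoid W := ⟨Erel B, ⟨Erel.refl, Erel.symm, Erel.trans⟩⟩
    let Ω := Quotient sQ
    let mk : W → Ω := Quotient.mk sQ
    have hmk_eq : ∀ {a b : W}, Erel B a b → mk a = mk b := fun h => Quotient.sound h
    have hmk_exact : ∀ {a b : W}, mk a = mk b → Erel B a b := fun h => Quotient.exact h
    let F : Ω → Ω := Quotient.map (fun u => (hout u).choose)
      (fun u u' h => Erel.step h (hout u).choose_spec (hout u').choose_spec)
    have hFmk : ∀ u : W, F (mk u) = mk (hout u).choose := fun u => rfl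
    have key : ∀ u v : W, B u v → F (mk u) = mk v := by
      intro u v h
      rw [hFmk]
      exact hmk_eq (Erel.step (Erel.refl u) (hout u).choose_spec h)
    let bar : (x : Equiv.Perm W) → x ∈ X → Ω → Ω := fun x hx =>
      Quotient.map (fun w => x w) (fun a b h => h.invariant hAut hx)
    have hbar_mk : ∀ (x : Equiv.Perm W) (hx : x ∈ X) (u : W),
        bar x hx (mk u) = mk (x u) := fun x hx u => rfl
    have hFbar : ∀ (x : Equiv.Perm W) (hx : x ∈ X) (c : Ω),
        F (bar x hx c) = bar x hx (F c) := by
      intro x hx c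
      induction c using Quotient.ind with
      | _ u =>
        show F (mk (x u)) = bar x hx (mk (hout u).choose)
        rw [hbar_mk x hx]
        exact key (x u) (x (hout u).choose) (hAut x hx _ _ (hout u).choose_spec)
    have hFsurj : Function.Surjective F := by
      intro c
      induction c using Quotient.ind with
      | _ u => exact ⟨mk (hin u).choose, key _ u (hin u).choose_spec⟩
    have hFinj : Function.Injective F := (Finite.injective_iff_surjective).mpr hFsurj
    let e : Equiv.Perm Ω := Equiv.ofBijective F ⟨hFinj, hFsurj⟩
    have he_apply : ∀ c : Ω, e c = F c := fun c => rfl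
    have hpow : ∀ (j : ℕ) (c : Ω), F^[j] c = (e ^ j) c := by
      intro j
      induction j with
      | zero => intro c; simp
      | succ j ih =>
        intro c
        rw [Function.iterate_succ_apply, ih, ← he_apply, pow_succ, Equiv.Perm.mul_apply]
    set n := orderOf e with hn_def
    have hn : 0 < n := orderOf_pos e
    have hFn : ∀ c : Ω, F^[n] c = c := by
      intro c
      rw [hpow, pow_orderOf_eq_one]
      rfl
    have reach : ∀ u v : W, Relation.ReflTransGen (fun a b => B a b ∨ B b a) u v →
        ∃ j : ℕ, F^[j] (mk u) = mk v := by
      intro u v h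
      induction h with
      | refl => exact ⟨0, rfl⟩
      | tail _ hbc ih =>
        obtain ⟨j, hj⟩ := ih
        rcases hbc with hB | hB
        · refine ⟨j + 1, ?_⟩
          rw [Function.iterate_succ_apply', hj]
          exact key _ _ hB
        · refine ⟨(n - 1) + j, ?_⟩
          rw [Function.iterate_add_apply, hj]
          have h1 := key _ _ hB
          rw [← h1, ← Function.iterate_succ_apply]
          have h2 : (n - 1).succ = n := by omega
          rw [h2, hFn]
    have shift : ∀ (x : Equiv.Perm W) (hx : x ∈ X) (c : Ω),
        ∃ j : ℕ, bar x hx c = F^[j] c := by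
      intro x hx c
      induction c using Quotient.ind with
      | _ u =>
        obtain ⟨j, hj⟩ := reach u (x u) (hconn u (x u))
        exact ⟨j, by rw [hbar_mk x hx, ← hj]⟩
    have iterEquiv : ∀ (x : Equiv.Perm W) (hx : x ∈ X) (j : ℕ) (c : Ω),
        F^[j] (bar x hx c) = bar x hx (F^[j] c) := by
      intro x hx j
      induction j with
      | zero => intro c; rfl
      | succ j ih =>
        intro c
        rw [Function.iterate_succ_apply', Function.iterate_succ_apply', ih, hFbar x hx]
    have comm : ∀ (x : Equiv.Perm W) (hx : x ∈ X) (y : Equiv.Perm W) (hy : y ∈ X) (c : Ω),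
        bar x hx (bar y hy c) = bar y hy (bar x hx c) := by
      intro x hx y hy c
      obtain ⟨a, ha⟩ := shift x hx c
      obtain ⟨b, hb⟩ := shift y hy c
      calc bar x hx (bar y hy c) = bar x hx (F^[b] c) := by rw [← hb]
        _ = F^[b] (bar x hx c) := (iterEquiv x hx b c).symm
        _ = F^[b] (F^[a] c) := by rw [ha]
        _ = F^[a] (F^[b] c) := by
            rw [← Function.iterate_add_apply, ← Function.iterate_add_apply, Nat.add_comm]
        _ = F^[a] (bar y hy c) := by rw [hb]
        _ = bar y hy (F^[a] c) := iterEquiv y hy a c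
        _ = bar y hy (bar x hx c) := by rw [← ha]
    obtain ⟨x, hx, y, hy, hnc⟩ := hnonabX
    have hcK : x * y * x⁻¹ * y⁻¹ ∈ K := by
      refine ⟨X.mul_mem (X.mul_mem (X.mul_mem hx hy) (X.inv_mem hx)) (X.inv_mem hy),
        fun w => ?_⟩
      apply hmk_exact
      have happ : (x * y * x⁻¹ * y⁻¹) w = x (y (x⁻¹ (y⁻¹ w))) := by
        simp [Equiv.Perm.mul_apply]
      rw [happ]
      calc mk (x (y (x⁻¹ (y⁻¹ w))))
          = bar x hx (bar y hy (mk (x⁻¹ (y⁻¹ w)))) := rfl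
        _ = bar y hy (bar x hx (mk (x⁻¹ (y⁻¹ w)))) := comm x hx y hy _
        _ = mk (y (x (x⁻¹ (y⁻¹ w)))) := rfl
        _ = mk w := by simp
    rw [hKbot, Subgroup.mem_bot] at hcK
    apply hnc
    calc x * y = (x * y * x⁻¹ * y⁻¹) * (y * x) := by group
      _ = y * x := by rw [hcK]; group
  · intro u v
    obtain ⟨x, hxK, hxvu⟩ := hqp K hKn hKbot v u
    have := hxK.2 v
    rwa [hxvu] at this

end Connectivity
section Realize

variable {W : Type*}

lemma sing_fwd {α : Type*} {r : α → α → Prop} {a b : α} (h : r a b) :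
    Relation.ReflTransGen (fun x y => r x y ∨ r y x) a b :=
  Relation.ReflTransGen.single (Or.inl h)

lemma sing_bwd {α : Type*} {r : α → α → Prop} {a b : α} (h : r b a) :
    Relation.ReflTransGen (fun x y => r x y ∨ r y x) a b :=
  Relation.ReflTransGen.single (Or.inr h)

lemma doubleArc_symrel (B : W → W → Prop) :
    Symmetric (fun a c : W × W × ZMod 2 => doubleArc B a c ∨ doubleArc B c a) :=
  fun _ _ h => h.symm

lemma erel_realize (B : W → W → Prop) (hin : ∀ u : W, ∃ z, B z u) {u v : W}
    (h : Erel B u v) (b : W) :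
    Relation.ReflTransGen (fun a c => doubleArc B a c ∨ doubleArc B c a)
      (u, b, (0 : ZMod 2)) (v, b, (0 : ZMod 2)) := by
  induction h generalizing b with
  | refl u => exact .refl
  | symm h ih => exact (@Relation.ReflTransGen.stdSymm _ _ ⟨doubleArc_symrel B⟩).symm _ _ (ih b)
  | trans h1 h2 ih1 ih2 => exact (ih1 b).trans (ih2 b)
  | @step z z' u v hzz hz hz' ih =>
    obtain ⟨b₁, hb₁⟩ := hin b
    have e1 : doubleArc B (z, b, (1 : ZMod 2)) (u, b, (0 : ZMod 2)) :=
      Or.inr ⟨rfl, rfl, hz, rfl⟩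
    have e2 : doubleArc B (z, b₁, (0 : ZMod 2)) (z, b, (1 : ZMod 2)) :=
      Or.inl ⟨rfl, rfl, rfl, hb₁⟩
    have e3 : doubleArc B (z', b₁, (0 : ZMod 2)) (z', b, (1 : ZMod 2)) :=
      Or.inl ⟨rfl, rfl, rfl, hb₁⟩
    have e4 : doubleArc B (z', b, (1 : ZMod 2)) (v, b, (0 : ZMod 2)) :=
      Or.inr ⟨rfl, rfl, hz', rfl⟩
    have s34 : Relation.ReflTransGen (fun a c => doubleArc B a c ∨ doubleArc B c a)
        (z', b₁, (0 : ZMod 2)) (v, b, (0 : ZMod 2)) :=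
      (sing_fwd e3).trans (sing_fwd e4)
    have s12 : Relation.ReflTransGen (fun a c => doubleArc B a c ∨ doubleArc B c a)
        (u, b, (0 : ZMod 2)) (z, b₁, (0 : ZMod 2)) :=
      (sing_bwd e1).trans (sing_bwd e2)
    exact s12.trans ((ih b₁).trans s34)

lemma erel_realize' (B : W → W → Prop) (hout : ∀ u : W, ∃ z, B u z) {u v : W}
    (h : Erel (flip B) u v) (a : W) :
    Relation.ReflTransGen (fun p q => doubleArc B p q ∨ doubleArc B q p)
      (a, u, (0 : ZMod 2)) (a, v, (0 : ZMod 2)) := by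
  induction h generalizing a with
  | refl u => exact .refl
  | symm h ih => exact (@Relation.ReflTransGen.stdSymm _ _ ⟨doubleArc_symrel B⟩).symm _ _ (ih a)
  | trans h1 h2 ih1 ih2 => exact (ih1 a).trans (ih2 a)
  | @step z z' u v hzz hz hz' ih =>
    obtain ⟨a₁, ha₁⟩ := hout a
    have e1 : doubleArc B (a, u, (0 : ZMod 2)) (a, z, (1 : ZMod 2)) :=
      Or.inl ⟨rfl, rfl, rfl, hz⟩
    have e2 : doubleArc B (a, z, (1 : ZMod 2)) (a₁, z, (0 : ZMod 2)) :=
      Or.inr ⟨rfl, rfl, ha₁, rfl⟩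
    have e3 : doubleArc B (a, z', (1 : ZMod 2)) (a₁, z', (0 : ZMod 2)) :=
      Or.inr ⟨rfl, rfl, ha₁, rfl⟩
    have e4 : doubleArc B (a, v, (0 : ZMod 2)) (a, z', (1 : ZMod 2)) :=
      Or.inl ⟨rfl, rfl, rfl, hz'⟩
    have s34 : Relation.ReflTransGen (fun p q => doubleArc B p q ∨ doubleArc B q p)
        (a₁, z', (0 : ZMod 2)) (a, v, (0 : ZMod 2)) :=
      (sing_bwd e3).trans (sing_bwd e4)
    have s12 : Relation.ReflTransGen (fun p q => doubleArc B p q ∨ doubleArc B q p)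
        (a, u, (0 : ZMod 2)) (a₁, z, (0 : ZMod 2)) :=
      (sing_fwd e1).trans (sing_fwd e2)
    exact s12.trans ((ih a₁).trans s34)

lemma zmod2_cases (z : ZMod 2) : z = 0 ∨ z = 1 := by revert z; decide

lemma double_connected [Finite W] {B : W → W → Prop} {X : Subgroup (Equiv.Perm W)}
    (hAut : PreservesArcs B X) (hconn : Connected B)
    (hout : ∀ u : W, ∃ v, B u v) (hin : ∀ u : W, ∃ v, B v u)
    (hqp : ∀ L : Subgroup (Equiv.Perm W), NormalIn L X → L ≠ ⊥ →
      ∀ u v : W, ∃ x ∈ L, x u = v)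
    (hnonabX : ∃ a ∈ X, ∃ b ∈ X, a * b ≠ b * a) :
    Connected (doubleArc B) := by
  have hE := Erel_top hAut hconn hout hin hqp hnonabX
  have hAut' : PreservesArcs (flip B) X := fun x hx u v h => hAut x hx v u h
  have hconn' : Connected (flip B) := by
    intro u v
    exact Relation.ReflTransGen.mono (fun a b (h : B a b ∨ B b a) => h.symm) _ _ (hconn u v)
  have hE' := Erel_top hAut' hconn' hin hout hqp hnonabX
  have to0 : ∀ p : W × W × ZMod 2, ∃ a b : W,
      Relation.ReflTransGen (fun a c => doubleArc B a c ∨ doubleArc B c a)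
        p (a, b, (0 : ZMod 2)) := by
    rintro ⟨p1, p2, pd⟩
    rcases zmod2_cases pd with h | h
    · subst h
      exact ⟨p1, p2, .refl⟩
    · subst h
      obtain ⟨b, hb⟩ := hin p2
      exact ⟨p1, b, sing_bwd (show doubleArc B (p1, b, (0 : ZMod 2)) (p1, p2, (1 : ZMod 2))
        from Or.inl ⟨rfl, rfl, rfl, hb⟩)⟩
  intro u v
  obtain ⟨a, b, hu⟩ := to0 u
  obtain ⟨a', b', hv⟩ := to0 v
  have h1 := erel_realize B hin (hE a a') b
  have h2 := erel_realize' B hout (hE' b b') a'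
  exact hu.trans (h1.trans (h2.trans
    ((@Relation.ReflTransGen.stdSymm _ _ ⟨doubleArc_symrel B⟩).symm _ _ hv)))

end Realize
section ArcTrans

variable {W : Type*}

lemma zmod2_01 : (0 : ZMod 2) ≠ 1 := by decide

lemma zmod2_two_mul (n : ℕ) : ((2 * n : ℕ) : ZMod 2) = 0 := by
  push_cast
  rw [show ((2 : ZMod 2)) = 0 by decide]
  ring

lemma zmod2_two_mul_add_one (n : ℕ) : ((2 * n + 1 : ℕ) : ZMod 2) = 1 := by
  push_cast
  rw [show ((2 : ZMod 2)) = 0 by decide]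
  ring

lemma darc_delta {B : W → W → Prop} {u u' : W × W × ZMod 2} (h : doubleArc B u u') :
    u'.2.2 = u.2.2 + 1 := by
  rcases h with ⟨h0, h1, _, _⟩ | ⟨h1, h0, _, _⟩
  · rw [h0, h1]; decide
  · rw [h0, h1]; decide

lemma darc_even {B : W → W → Prop} {u u' : W × W × ZMod 2} (h : doubleArc B u u')
    (h0 : u.2.2 = 0) : u'.1 = u.1 ∧ B u.2.1 u'.2.1 ∧ u'.2.2 = 1 := by
  rcases h with ⟨_, h1, h2, h3⟩ | ⟨hc, _, _, _⟩
  · exact ⟨h2, h3, h1⟩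
  · rw [h0] at hc; exact absurd hc zmod2_01

lemma darc_odd {B : W → W → Prop} {u u' : W × W × ZMod 2} (h : doubleArc B u u')
    (h1 : u.2.2 = 1) : B u.1 u'.1 ∧ u.2.1 = u'.2.1 ∧ u'.2.2 = 0 := by
  rcases h with ⟨hc, _, _, _⟩ | ⟨_, h0, h2, h3⟩
  · rw [h1] at hc; exact absurd hc.symm zmod2_01
  · exact ⟨h2, h3, h0⟩

lemma arcseq_delta {B : W → W → Prop} {m : ℕ} {p : Fin (m + 1) → W × W × ZMod 2}
    (hp : IsArcSeq (doubleArc B) m p) :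
    ∀ (n : ℕ) (hn : n < m + 1), (p ⟨n, hn⟩).2.2 = (p 0).2.2 + (n : ZMod 2) := by
  intro n
  induction n with
  | zero =>
    intro hn
    rw [show (⟨0, hn⟩ : Fin (m + 1)) = 0 by ext; simp]
    simp
  | succ n ih =>
    intro hn
    have hn' : n < m + 1 := by omega
    have hnm : n < m := by omega
    have harc := hp ⟨n, hnm⟩
    have hd := darc_delta harc
    rw [show (⟨n + 1, hn⟩ : Fin (m + 1)) = (⟨n, hnm⟩ : Fin m).succ from rfl, hd,
      show ((⟨n, hnm⟩ : Fin m).castSucc) = ⟨n, hn'⟩ from rfl, ih hn']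
    push_cast
    ring

lemma preserves_arcseq {α : Type*} {D : α → α → Prop} {e : Equiv.Perm α}
    (he : ∀ u v, D u v → D (e u) (e v)) {m : ℕ} {p : Fin (m + 1) → α}
    (hp : IsArcSeq D m p) : IsArcSeq D m (fun i => e (p i)) :=
  fun i => he _ _ (hp i)

lemma pairHom_preserves {B : W → W → Prop} {X : Subgroup (Equiv.Perm W)}
    (hAut : PreservesArcs B X) {x y : Equiv.Perm W} (hx : x ∈ X) (hy : y ∈ X) :
    ∀ u v, doubleArc B u v → doubleArc B (pairHom (x, y) u) (pairHom (x, y) v) := by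
  rintro u v (⟨h0, h1, h2, h3⟩ | ⟨h1, h0, h2, h3⟩)
  · exact Or.inl ⟨h0, h1, by simp [h2], hAut y hy _ _ h3⟩
  · exact Or.inr ⟨h1, h0, hAut x hx _ _ h2, by simp [h3]⟩

lemma tPerm_preserves {B : W → W → Prop} {X : Subgroup (Equiv.Perm W)}
    (hAut : PreservesArcs B X) {g : Equiv.Perm W} (hg : g ∈ X) :
    ∀ u v, doubleArc B u v → doubleArc B (tPerm g u) (tPerm g v) := by
  rintro u v (⟨h0, h1, h2, h3⟩ | ⟨h1, h0, h2, h3⟩)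
  · refine Or.inr ⟨by simp [h0], by simp [h1]; decide, h3, by simp [h2]⟩
  · refine Or.inl ⟨by simp [h1]; decide, by simp [h0], by simp [h3],
      hAut g hg _ _ h2⟩

lemma tPerm_inv_preserves {B : W → W → Prop} {X : Subgroup (Equiv.Perm W)}
    (hAut : PreservesArcs B X) {g : Equiv.Perm W} (hg : g ∈ X) :
    ∀ u v, doubleArc B u v → doubleArc B ((tPerm g)⁻¹ u) ((tPerm g)⁻¹ v) := by
  intro u v h
  rw [tPerm_inv]
  have h1 := tPerm_preserves hAut hg u v h
  have h2 := pairHom_preserves hAut (X.inv_mem hg) (X.inv_mem hg) _ _ h1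
  simpa [Equiv.Perm.mul_apply] using h2

end ArcTrans
section ArcTrans2

variable {W : Type*}

lemma layer0_map {B : W → W → Prop} {X : Subgroup (Equiv.Perm W)} {s : ℕ}
    (hAut : PreservesArcs B X) (hat : ArcTransitive B X s)
    (p q : Fin (2 * s + 1) → W × W × ZMod 2)
    (hp : IsArcSeq (doubleArc B) (2 * s) p) (hq : IsArcSeq (doubleArc B) (2 * s) q)
    (hp0 : (p 0).2.2 = 0) (hq0 : (q 0).2.2 = 0) :
    ∃ h ∈ doubleGroupPlus X, ∀ i : Fin (2 * s + 1), h (p i) = q i := by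
  have hstep : ∀ (r : Fin (2*s+1) → W × W × ZMod 2), IsArcSeq (doubleArc B) (2*s) r →
      ∀ (n : ℕ) (h : n < 2*s) (h1 : n < 2*s+1) (h2 : n+1 < 2*s+1),
      doubleArc B (r ⟨n, h1⟩) (r ⟨n+1, h2⟩) := fun r hr n h _ _ => hr ⟨n, h⟩
  have hdel : ∀ (r : Fin (2*s+1) → W × W × ZMod 2), IsArcSeq (doubleArc B) (2*s) r →
      (r 0).2.2 = 0 → ∀ (n : ℕ) (hn : n < 2*s+1), (r ⟨n, hn⟩).2.2 = (n : ZMod 2) := by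
    intro r hr h0 n hn
    rw [arcseq_delta hr n hn, h0, zero_add]
  have heo : ∀ (r : Fin (2*s+1) → W × W × ZMod 2), IsArcSeq (doubleArc B) (2*s) r →
      (r 0).2.2 = 0 → ∀ (j : ℕ) (hj : j < s),
      ((r ⟨2*j+1, by omega⟩).1 = (r ⟨2*j, by omega⟩).1 ∧
        B (r ⟨2*j, by omega⟩).2.1 (r ⟨2*j+1, by omega⟩).2.1) ∧
      (B (r ⟨2*j+1, by omega⟩).1 (r ⟨2*j+2, by omega⟩).1 ∧
        (r ⟨2*j+1, by omega⟩).2.1 = (r ⟨2*j+2, by omega⟩).2.1) := by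
    intro r hr h0 j hj
    have he := darc_even (hstep r hr (2*j) (by omega) (by omega) (by omega))
      (by rw [hdel r hr h0 (2*j) (by omega)]; exact zmod2_two_mul j)
    have ho := darc_odd (hstep r hr (2*j+1) (by omega) (by omega) (by omega))
      (by rw [hdel r hr h0 (2*j+1) (by omega)]; exact zmod2_two_mul_add_one j)
    exact ⟨⟨he.1, he.2.1⟩, ⟨ho.1, ho.2.1⟩⟩
  -- the coordinate s-arcs
  let vp : Fin (s+1) → W := fun j => (p ⟨2*j.1, by have := j.2; omega⟩).1
  let wp : Fin (s+1) → W := fun j => (p ⟨2*j.1, by have := j.2; omega⟩).2.1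
  let vq : Fin (s+1) → W := fun j => (q ⟨2*j.1, by have := j.2; omega⟩).1
  let wq : Fin (s+1) → W := fun j => (q ⟨2*j.1, by have := j.2; omega⟩).2.1
  have hidx : ∀ (j : ℕ) (h1 : 2*(j+1) < 2*s+1) (h2 : 2*j+2 < 2*s+1),
      (⟨2*(j+1), h1⟩ : Fin (2*s+1)) = ⟨2*j+2, h2⟩ := by
    intro j h1 h2
    ext
    simp
    omega
  have hv : ∀ (r : Fin (2*s+1) → W × W × ZMod 2), IsArcSeq (doubleArc B) (2*s) r →
      (r 0).2.2 = 0 →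
      IsArcSeq B s (fun j : Fin (s+1) => (r ⟨2*j.1, by have := j.2; omega⟩).1) := by
    intro r hr h0 i
    have hi := i.2
    have h1 := ((heo r hr h0 i.1 hi).1).1
    have h2 := ((heo r hr h0 i.1 hi).2).1
    show B (r ⟨2*i.1, by omega⟩).1 (r ⟨2*(i.1+1), by omega⟩).1
    rw [hidx i.1 (by omega) (by omega), ← h1]
    exact h2
  have hw : ∀ (r : Fin (2*s+1) → W × W × ZMod 2), IsArcSeq (doubleArc B) (2*s) r →
      (r 0).2.2 = 0 →
      IsArcSeq B s (fun j : Fin (s+1) => (r ⟨2*j.1, by have := j.2; omega⟩).2.1) := by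
    intro r hr h0 i
    have hi := i.2
    have h1 := ((heo r hr h0 i.1 hi).1).2
    have h2 := ((heo r hr h0 i.1 hi).2).2
    show B (r ⟨2*i.1, by omega⟩).2.1 (r ⟨2*(i.1+1), by omega⟩).2.1
    rw [hidx i.1 (by omega) (by omega), ← h2]
    exact h1
  obtain ⟨x, hx, hxv⟩ := hat vp vq (hv p hp hp0) (hv q hq hq0)
  obtain ⟨y, hy, hyw⟩ := hat wp wq (hw p hp hp0) (hw q hq hq0)
  refine ⟨pairHom (x, y), mem_doubleGroupPlus.mpr ⟨x, hx, y, hy, rfl⟩, ?_⟩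
  rintro ⟨n, hn⟩
  rcases Nat.even_or_odd n with he | ho
  · obtain ⟨j, hj⟩ := he
    have hj2 : n = 2*j := by omega
    subst hj2
    have hjs : j < s + 1 := by omega
    refine Prod.ext_iff.mpr ⟨?_, Prod.ext_iff.mpr ⟨?_, ?_⟩⟩
    · exact hxv ⟨j, hjs⟩
    · exact hyw ⟨j, hjs⟩
    · show (p ⟨2*j, hn⟩).2.2 = (q ⟨2*j, hn⟩).2.2
      rw [hdel p hp hp0 _ hn, hdel q hq hq0 _ hn]
  · obtain ⟨j, hj⟩ := ho
    subst hj
    have hjs : j < s := by omega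
    have hep := (heo p hp hp0 j hjs).1.1
    have heq := (heo q hq hq0 j hjs).1.1
    have hop := (heo p hp hp0 j hjs).2.2
    have hoq := (heo q hq hq0 j hjs).2.2
    refine Prod.ext_iff.mpr ⟨?_, Prod.ext_iff.mpr ⟨?_, ?_⟩⟩
    · show x (p ⟨2*j+1, hn⟩).1 = (q ⟨2*j+1, hn⟩).1
      rw [hep, heq]
      exact hxv ⟨j, by omega⟩
    · show y (p ⟨2*j+1, hn⟩).2.1 = (q ⟨2*j+1, hn⟩).2.1
      rw [hop, hoq]
      have h5 : y (p ⟨2*(j+1), by omega⟩).2.1 = (q ⟨2*(j+1), by omega⟩).2.1 :=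
        hyw ⟨j+1, by omega⟩
      show y (p ⟨2*j+2, by omega⟩).2.1 = (q ⟨2*j+2, by omega⟩).2.1
      rwa [hidx j (by omega) (by omega)] at h5
    · show (p ⟨2*j+1, hn⟩).2.2 = (q ⟨2*j+1, hn⟩).2.2
      rw [hdel p hp hp0 _ hn, hdel q hq hq0 _ hn]

end ArcTrans2
section ArcTrans3

variable {W : Type*}

lemma double_arcTransitive {B : W → W → Prop} {X : Subgroup (Equiv.Perm W)}
    {g : Equiv.Perm W} {s : ℕ} (hAut : PreservesArcs B X) (hat : ArcTransitive B X s)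
    (hg : g ∈ X) :
    ArcTransitive (doubleArc B) (doubleGroup X g) (2 * s) := by
  intro p q hp hq
  have htmem := tPerm_mem X g
  have hGp := doubleGroupPlus_le X g
  have hpt : IsArcSeq (doubleArc B) (2*s) (fun i => tPerm g (p i)) :=
    preserves_arcseq (tPerm_preserves hAut hg) hp
  have hqt : IsArcSeq (doubleArc B) (2*s) (fun i => tPerm g (q i)) :=
    preserves_arcseq (tPerm_preserves hAut hg) hq
  rcases zmod2_cases ((p 0).2.2) with hp0 | hp1 <;>
    rcases zmod2_cases ((q 0).2.2) with hq0 | hq1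
  · obtain ⟨h, hh, hmap⟩ := layer0_map hAut hat p q hp hq hp0 hq0
    exact ⟨h, hGp hh, hmap⟩
  · have hqt0 : ((fun i => tPerm g (q i)) 0).2.2 = 0 := by
      show (tPerm g (q 0)).2.2 = 0
      rw [tPerm_apply]
      show (q 0).2.2 + 1 = 0
      rw [hq1]; decide
    obtain ⟨h, hh, hmap⟩ := layer0_map hAut hat p (fun i => tPerm g (q i)) hp hqt hp0 hqt0
    refine ⟨(tPerm g)⁻¹ * h, (doubleGroup X g).mul_mem
      ((doubleGroup X g).inv_mem htmem) (hGp hh), ?_⟩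
    intro i
    show ((tPerm g)⁻¹ * h) (p i) = q i
    rw [Equiv.Perm.mul_apply, hmap i]
    exact Equiv.symm_apply_apply _ _
  · have hpt0 : ((fun i => tPerm g (p i)) 0).2.2 = 0 := by
      show (tPerm g (p 0)).2.2 = 0
      rw [tPerm_apply]
      show (p 0).2.2 + 1 = 0
      rw [hp1]; decide
    obtain ⟨h, hh, hmap⟩ := layer0_map hAut hat (fun i => tPerm g (p i)) q hpt hq hpt0 hq0
    refine ⟨h * tPerm g, (doubleGroup X g).mul_mem (hGp hh) htmem, ?_⟩
    intro i
    show (h * tPerm g) (p i) = q i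
    rw [Equiv.Perm.mul_apply]
    exact hmap i
  · have hpt0 : ((fun i => tPerm g (p i)) 0).2.2 = 0 := by
      show (tPerm g (p 0)).2.2 = 0
      rw [tPerm_apply]
      show (p 0).2.2 + 1 = 0
      rw [hp1]; decide
    have hqt0 : ((fun i => tPerm g (q i)) 0).2.2 = 0 := by
      show (tPerm g (q 0)).2.2 = 0
      rw [tPerm_apply]
      show (q 0).2.2 + 1 = 0
      rw [hq1]; decide
    obtain ⟨h, hh, hmap⟩ := layer0_map hAut hat (fun i => tPerm g (p i))
      (fun i => tPerm g (q i)) hpt hqt hpt0 hqt0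
    refine ⟨(tPerm g)⁻¹ * h * tPerm g, (doubleGroup X g).mul_mem ((doubleGroup X g).mul_mem
      ((doubleGroup X g).inv_mem htmem) (hGp hh)) htmem, ?_⟩
    intro i
    show ((tPerm g)⁻¹ * h * tPerm g) (p i) = q i
    rw [Equiv.Perm.mul_apply, Equiv.Perm.mul_apply, hmap i]
    exact Equiv.symm_apply_apply _ _

lemma double_isDigraph {B : W → W → Prop} (hdig : IsDigraph B) :
    IsDigraph (doubleArc B) := by
  rintro u v (⟨h0, h1, h2, h3⟩ | ⟨h1, h0, h2, h3⟩) <;>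
    rintro (⟨g0, g1, g2, g3⟩ | ⟨g1, g0, g2, g3⟩)
  · exact zmod2_01 (g0.symm.trans h1)
  · rw [h2] at g2; exact hdig _ _ g2 g2
  · rw [g2] at h2; exact hdig _ _ h2 h2
  · exact zmod2_01 (h0.symm.trans g1)

end ArcTrans3
section BiQP

variable {W : Type*}

lemma L_orbits [Finite W] {N₀ : Subgroup (Equiv.Perm W)} (w0 : W)
    (htrans : ∀ u v : W, ∃ x ∈ N₀, x u = v) :
    Nat.card (Quotient (MulAction.orbitRel (Subgroup.map (pairHom (W := W)) (N₀.prod N₀))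
      (W × W × ZMod 2))) = 2 := by
  set L := Subgroup.map (pairHom (W := W)) (N₀.prod N₀) with hL
  have hresp : ∀ u v : W × W × ZMod 2,
      (MulAction.orbitRel L (W × W × ZMod 2)).r u v → u.2.2 = v.2.2 := by
    intro u v huv
    obtain ⟨h, hh⟩ := huv
    obtain ⟨a, ha, b, hb, hform⟩ := mem_map_pairHom_prod.mp h.2
    have : (h : Equiv.Perm (W × W × ZMod 2)) v = u := hh
    rw [hform] at this
    rw [← this]
    rfl
  let fdelta : Quotient (MulAction.orbitRel L (W × W × ZMod 2)) → ZMod 2 :=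
    Quotient.lift (fun u => u.2.2) (fun u v huv => hresp u v huv)
  have hbij : Function.Bijective fdelta := by
    constructor
    · intro c d
      induction c using Quotient.ind with
      | _ u =>
        induction d using Quotient.ind with
        | _ v =>
          intro h
          have huv : u.2.2 = v.2.2 := h
          obtain ⟨a, ha, hav⟩ := htrans v.1 u.1
          obtain ⟨b, hb, hbv⟩ := htrans v.2.1 u.2.1
          apply Quotient.sound
          refine ⟨⟨pairHom (a, b), mem_map_pairHom_prod.mpr ⟨a, ha, b, hb, rfl⟩⟩, ?_⟩
          show pairHom (a, b) v = u
          rw [pairHom_apply]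
          exact Prod.ext_iff.mpr ⟨hav, Prod.ext_iff.mpr ⟨hbv, huv.symm⟩⟩
    · intro z
      exact ⟨Quotient.mk _ (w0, w0, z), rfl⟩
  rw [Nat.card_eq_of_bijective fdelta hbij]
  simp [Nat.card_eq_fintype_card]

lemma orbits_le_two {α : Type*} [Finite α] {M N : Subgroup (Equiv.Perm α)}
    (hMN : M ≤ N) (h2 : Nat.card (Quotient (MulAction.orbitRel M α)) = 2) :
    Nat.card (Quotient (MulAction.orbitRel N α)) ≤ 2 := by
  have hsurj : Function.Surjective
      (Quotient.lift (fun u : α => (Quotient.mk (MulAction.orbitRel N α) u))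
        (fun u v huv => by
          obtain ⟨h, hh⟩ := huv
          exact Quotient.sound ⟨⟨(h : Equiv.Perm α), hMN h.2⟩, hh⟩) :
      Quotient (MulAction.orbitRel M α) → Quotient (MulAction.orbitRel N α)) := by
    intro c
    induction c using Quotient.ind with
    | _ u => exact ⟨Quotient.mk _ u, rfl⟩
  have := Nat.card_le_card_of_surjective _ hsurj
  omega

end BiQP
theorem doubling_biquasiprimitive
    [Finite W] (B : W → W → Prop) (X : Subgroup (Equiv.Perm W)) (s k : ℕ)
    (v₀ v₁ : W) (g : Equiv.Perm W)
    (hdig : IsDigraph B) (hk : 2 ≤ k) (hval : Valency B k)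
    (hAut : PreservesArcs B X) (hvt : VertexTransitive X)
    (hs : 2 ≤ s) (hat : ArcTransitive B X s)
    (harc : B v₀ v₁) (hg : g ∈ X) (hgv : g v₀ = v₁)
    -- Δ is connected and not bipartite
    (hconn : Connected B) (hnotbip : ¬ Bipartite B)
    -- X has a unique minimal normal subgroup N₀, and N₀ is nonabelian
    (N₀ : Subgroup (Equiv.Perm W)) (hmin : MinimalNormalIn N₀ X)
    (huniq : ∀ L : Subgroup (Equiv.Perm W), MinimalNormalIn L X → L = N₀)
    (hnonab : ¬ ∀ a ∈ N₀, ∀ b ∈ N₀, a * b = b * a) :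
    -- G has a unique minimal normal subgroup, namely L = N₀ × N₀ ≤ X × X
    (MinimalNormalIn (Subgroup.map pairHom (N₀.prod N₀)) (doubleGroup X g) ∧
      ∀ L' : Subgroup (Equiv.Perm (W × W × ZMod 2)),
        MinimalNormalIn L' (doubleGroup X g) →
        L' = Subgroup.map pairHom (N₀.prod N₀)) ∧
    -- if moreover X is quasiprimitive on VΔ, then G is bi-quasiprimitive on VΓ and
    -- Γ is a connected (G,2s)-arc-transitive digraph
    ((∀ L : Subgroup (Equiv.Perm W), NormalIn L X → L ≠ ⊥ →
        ∀ u v : W, ∃ x ∈ L, x u = v) →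
      (BiQuasiprimitive (doubleGroup X g) ∧
        Connected (doubleArc B) ∧ IsDigraph (doubleArc B) ∧
        ArcTransitive (doubleArc B) (doubleGroup X g) (2 * s))) := by
  have hLmin := L_minimal hg hmin hnonab
  have hLuniq := L_unique hg hmin huniq hnonab
  refine ⟨⟨hLmin, hLuniq⟩, ?_⟩
  intro hqp
  have hNtrans : ∀ u v : W, ∃ x ∈ N₀, x u = v := hqp N₀ hmin.1 hmin.2.1
  have hnonabX : ∃ a ∈ X, ∃ b ∈ X, a * b ≠ b * a := by
    push_neg at hnonab
    obtain ⟨a, ha, b, hb, hab⟩ := hnonab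
    exact ⟨a, hmin.1.1 ha, b, hmin.1.1 hb, hab⟩
  have hout : ∀ u : W, ∃ v, B u v := by
    intro u
    have h := Set.nonempty_of_ncard_ne_zero (s := {w : W | B u w}) (by rw [(hval u).1]; omega)
    exact h
  have hin : ∀ u : W, ∃ v, B v u := by
    intro u
    have h := Set.nonempty_of_ncard_ne_zero (s := {w : W | B w u}) (by rw [(hval u).2]; omega)
    exact h
  refine ⟨⟨?_, ?_⟩, ?_, double_isDigraph hdig, double_arcTransitive hAut hat hg⟩
  · intro N hNn hNbot
    obtain ⟨M, hMmin, hMle⟩ := exists_minimalNormal_le (doubleGroup X g) (Nat.card N)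
      N le_rfl hNn hNbot
    have hML := hLuniq M hMmin
    exact orbits_le_two (hML ▸ hMle) (L_orbits v₀ hNtrans)
  · exact ⟨Subgroup.map pairHom (N₀.prod N₀), hLmin.1, L_orbits v₀ hNtrans⟩
  · exact double_connected hAut hconn hout hin hqp hnonabX

end Doubling
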